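/- Let A be a real m×n matrix with Moore–Penrose pseudoinverse A⁺. Let c ∈ ℝᵐ be a vector that does not lie in the column space of A, let b ∈ ℝᵐ lie in the column space of A, and let j be a column index such that the row vector v = e_jᵀ·(Iₙ − A⁺·A) is nonzero. Let B⁺ be a Moore–Penrose pseudoinverse of à = A + c·e_jᵀ, and set x = A⁺·b and x̃ = B⁺·b. Then x − x̃ = (x_j/‖v‖²)·vᵀ; consequently ‖x − x̃‖ = |x_j|/‖v‖, and in particular if x_j = 0 then x̃ = x. -/

import Mathlib

open Matrix

/-- Perturbing column `F_j` of `A` by a vector `c` outside the column space of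
`A` changes the minimum-norm least-squares solution by exactly
`(x_j/‖v‖²) vᵀ`, where `v = e_jᵀ(I - A⁺A)`; hence `‖x - x̃‖ = |x_j|/‖v‖` and
`x̃ = x` whenever `x_j = 0`. -/
theorem perturbation_solution_difference_formula
    {m n : ℕ} (A : Matrix (Fin m) (Fin n) ℝ) (Ap : Matrix (Fin n) (Fin m) ℝ)
    (h1 : A * Ap * A = A) (h2 : Ap * A * Ap = Ap)
    (h3 : (A * Ap)ᵀ = A * Ap) (h4 : (Ap * A)ᵀ = Ap * A)
    (c : Fin m → ℝ) (hc : c ∉ LinearMap.range A.mulVecLin)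
    (b : Fin m → ℝ) (hb : b ∈ LinearMap.range A.mulVecLin)
    (j : Fin n)
    (v : Fin n → ℝ) (hv : v = ((1 : Matrix (Fin n) (Fin n) ℝ) - Ap * A) j)
    (hv0 : v ≠ 0)
    (Bp : Matrix (Fin n) (Fin m) ℝ)
    (hb1 : (A + vecMulVec c (Pi.single j 1)) * Bp * (A + vecMulVec c (Pi.single j 1))
        = A + vecMulVec c (Pi.single j 1))
    (hb2 : Bp * (A + vecMulVec c (Pi.single j 1)) * Bp = Bp)
    (hb3 : ((A + vecMulVec c (Pi.single j 1)) * Bp)ᵀ = (A + vecMulVec c (Pi.single j 1)) * Bp)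
    (hb4 : (Bp * (A + vecMulVec c (Pi.single j 1)))ᵀ = Bp * (A + vecMulVec c (Pi.single j 1)))
    (x x' : Fin n → ℝ) (hx : x = Ap.mulVec b) (hx' : x' = Bp.mulVec b) :
    x - x' = (x j / (v ⬝ᵥ v)) • v ∧
    Real.sqrt ((x - x') ⬝ᵥ (x - x')) = |x j| / Real.sqrt (v ⬝ᵥ v) ∧
    (x j = 0 → x' = x) := by
  clear hb2 hb3
  set At : Matrix (Fin m) (Fin n) ℝ := A + vecMulVec c (Pi.single j 1) with hAt
  obtain ⟨z, hz⟩ := hb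
  simp only [mulVecLin_apply] at hz
  -- basic dot/square facts
  have hvv_pos : 0 < v ⬝ᵥ v := by
    rcases lt_or_eq_of_le (Finset.sum_nonneg fun i _ => mul_self_nonneg (v i) :
      (0:ℝ) ≤ v ⬝ᵥ v) with h | h
    · exact h
    · exact absurd (dotProduct_self_eq_zero.mp h.symm) hv0
  have hvvne : v ⬝ᵥ v ≠ 0 := ne_of_gt hvv_pos
  set α : ℝ := x j / (v ⬝ᵥ v) with hα
  set xt : Fin n → ℝ := x - α • v with hxt
  -- A x = b
  have hAx : A *ᵥ x = b := by
    rw [hx, mulVec_mulVec, ← hz, mulVec_mulVec, h1]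
  -- symmetric idempotent P = Ap * A, facts about v
  have hMT : ((1 : Matrix (Fin n) (Fin n) ℝ) - Ap * A)ᵀ = 1 - Ap * A := by
    rw [transpose_sub, transpose_one, h4]
  have hPP : Ap * A * (Ap * A) = Ap * A := by
    rw [← Matrix.mul_assoc, h2]
  have hMM : ((1 : Matrix (Fin n) (Fin n) ℝ) - Ap * A) * (1 - Ap * A) = 1 - Ap * A := by
    rw [Matrix.sub_mul, Matrix.mul_sub, Matrix.mul_sub, Matrix.one_mul, Matrix.one_mul,
      Matrix.mul_one, hPP]
    abel
  have hvrep : v = ((1 : Matrix (Fin n) (Fin n) ℝ) - Ap * A)ᵀ *ᵥ Pi.single j 1 := by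
    rw [mulVec_single_one]
    exact hv
  -- A v = 0
  have hAv : A *ᵥ v = 0 := by
    rw [hvrep, hMT, mulVec_mulVec, Matrix.mul_sub, Matrix.mul_one, ← Matrix.mul_assoc, h1,
      sub_self, zero_mulVec]
  -- v ⬝ v = v j
  have hvvj : v ⬝ᵥ v = v j := by
    have e1 : v ⬝ᵥ v = ((((1 : Matrix (Fin n) (Fin n) ℝ) - Ap * A) *
        ((1 : Matrix (Fin n) (Fin n) ℝ) - Ap * A))) j j := by
      rw [mul_apply]
      refine Finset.sum_congr rfl fun k _ => ?_
      have hsym : ((1 : Matrix (Fin n) (Fin n) ℝ) - Ap * A) k j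
          = ((1 : Matrix (Fin n) (Fin n) ℝ) - Ap * A) j k := congrFun (congrFun hMT j) k
      rw [hv, hsym]
    rw [e1, hMM, hv]
  -- xt j = 0
  have hxtj : xt j = 0 := by
    simp only [hxt, Pi.sub_apply, Pi.smul_apply, smul_eq_mul, hα]
    rw [← hvvj, div_mul_cancel₀ _ hvvne, sub_self]
  -- At xt = b
  have hAtxt : At *ᵥ xt = b := by
    rw [hAt, add_mulVec, mulVec_sub, hAx, mulVec_smul, hAv, smul_zero, sub_zero]
    have : vecMulVec c (Pi.single j 1) *ᵥ xt = (Pi.single j 1 ⬝ᵥ xt) • c := by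
      ext i
      simp only [mulVec, dotProduct, vecMulVec_apply, Pi.smul_apply, smul_eq_mul,
        Finset.sum_mul]
      exact Finset.sum_congr rfl fun k _ => by ring
    rw [this]
    rw [single_dotProduct, one_mul, hxtj, zero_smul, add_zero]
  -- x in range Aᵀ : x = Aᵀ *ᵥ (Apᵀ *ᵥ x)
  have hxr : x = Aᵀ *ᵥ (Apᵀ *ᵥ x) := by
    have : x = (Ap * A) *ᵥ x := by
      rw [hx, mulVec_mulVec, Matrix.mul_assoc, ← Matrix.mul_assoc, h2]
    rw [mulVec_mulVec, ← transpose_mul, h4]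
    exact this
  -- v = e_j - Aᵀ (Apᵀ e_j)
  have hvr : v = Pi.single j 1 - Aᵀ *ᵥ (Apᵀ *ᵥ Pi.single j 1) := by
    rw [hvrep, hMT, sub_mulVec, one_mulVec, ← h4, transpose_mul, ← mulVec_mulVec]
  -- p := c - (A * Ap) c, Aᵀ p = 0, c ⬝ p ≠ 0
  set p : Fin m → ℝ := c - (A * Ap) *ᵥ c with hp
  have hATAAp : Aᵀ * (A * Ap) = Aᵀ := by
    rw [← h3, ← transpose_mul, h1]
  have hATp : Aᵀ *ᵥ p = 0 := by
    rw [hp, mulVec_sub, mulVec_mulVec, hATAAp, sub_self]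
  have hpne : p ≠ 0 := by
    intro h
    apply hc
    refine ⟨Ap *ᵥ c, ?_⟩
    simp only [mulVecLin_apply]
    have := sub_eq_zero.mp h
    rw [mulVec_mulVec, ← this]
  have hQ : (A * Ap) * (A * Ap) = A * Ap := by
    rw [← Matrix.mul_assoc, h1]
  have hQp : (A * Ap) *ᵥ p = 0 := by
    rw [hp, mulVec_sub, mulVec_mulVec, hQ, sub_self]
  have hcp : c ⬝ᵥ p = p ⬝ᵥ p := by
    have e : p ⬝ᵥ ((A * Ap) *ᵥ c) = 0 := by
      rw [dotProduct_mulVec, ← h3, vecMul_transpose, hQp, zero_dotProduct]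
    have hc' : c = p + (A * Ap) *ᵥ c := by rw [hp, sub_add_cancel]
    calc c ⬝ᵥ p = (p + (A * Ap) *ᵥ c) ⬝ᵥ p := by rw [← hc']
      _ = p ⬝ᵥ p + ((A * Ap) *ᵥ c) ⬝ᵥ p := add_dotProduct _ _ _
      _ = p ⬝ᵥ p := by rw [dotProduct_comm ((A * Ap) *ᵥ c) p, e, add_zero]
  have hcpne : c ⬝ᵥ p ≠ 0 := by
    rw [hcp]
    exact fun h => hpne (dotProduct_self_eq_zero.mp h)
  -- the witness w
  set w0 : Fin m → ℝ := Apᵀ *ᵥ x + α • (Apᵀ *ᵥ Pi.single j 1) with hw0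
  set t : ℝ := (-α - c ⬝ᵥ w0) / (c ⬝ᵥ p) with ht
  set w : Fin m → ℝ := w0 + t • p with hw
  have hAtT : Atᵀ = Aᵀ + vecMulVec (Pi.single j 1) c := by
    rw [hAt, transpose_add]
    congr 1
    ext i k; simp [vecMulVec_apply, transpose_apply, mul_comm]
  have hATw : Aᵀ *ᵥ w = Aᵀ *ᵥ w0 := by
    rw [hw, mulVec_add, mulVec_smul, hATp, smul_zero, add_zero]
  have hcw : c ⬝ᵥ w = -α := by
    rw [hw, dotProduct_add, dotProduct_smul, smul_eq_mul, ht, div_mul_cancel₀ _ hcpne]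
    ring
  have hxtr : Atᵀ *ᵥ w = xt := by
    rw [hAtT, add_mulVec, hATw]
    have h5 : vecMulVec (Pi.single j 1) c *ᵥ w = (c ⬝ᵥ w) • (Pi.single j 1 : Fin n → ℝ) := by
      ext i
      simp only [mulVec, dotProduct, vecMulVec_apply, Pi.smul_apply, smul_eq_mul,
        Finset.sum_mul]
      exact Finset.sum_congr rfl fun k _ => by ring
    rw [h5, hcw, hw0, mulVec_add, mulVec_smul]
    rw [hxt, hvr]
    nth_rewrite 2 [hxr]
    ext i
    simp [smul_sub]
    ring
  -- x' = xt
  have hx'xt : x' = xt := by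
    have : b = At *ᵥ (Atᵀ *ᵥ w) := by rw [hxtr, hAtxt]
    rw [hx', this, mulVec_mulVec, mulVec_mulVec, ← hb4, ← transpose_mul, ← Matrix.mul_assoc, hb1,
      hxtr]
  have key : x - x' = α • v := by
    rw [hx'xt, hxt]
    ext i; simp
  refine ⟨key, ?_, ?_⟩
  · rw [key]
    have e2 : (α • v) ⬝ᵥ (α • v) = α ^ 2 * (v ⬝ᵥ v) := by
      rw [smul_dotProduct, dotProduct_smul, smul_eq_mul, smul_eq_mul]; ring
    have hsne : Real.sqrt (v ⬝ᵥ v) ≠ 0 := by positivity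
    rw [e2, Real.sqrt_mul (sq_nonneg α), Real.sqrt_sq_eq_abs, hα, abs_div,
      abs_of_pos hvv_pos, div_mul_eq_mul_div, div_eq_div_iff hvvne hsne, mul_assoc,
      Real.mul_self_sqrt (le_of_lt hvv_pos)]
  · intro h
    have : x - x' = 0 := by rw [key, hα, h, zero_div, zero_smul]
    ext i
    have := congrFun this i
    simp at this
    linarith [this]
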